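/- Let T be an antilinear operator on ℂ² with T² = -I. If P is a 2×2 complex matrix with P² = I and PT = TP (as maps on ℂ²), then P = I or P = -I. -/

import Mathlib

open Matrix Complex

lemma aux_no_fix (T : (Fin 2 → ℂ) → (Fin 2 → ℂ))
    (hT : ∀ (s t : ℂ) (x y : Fin 2 → ℂ),
      T (s • x + t • y) = (starRingEnd ℂ s) • T x + (starRingEnd ℂ t) • T y)
    (hT2 : ∀ x, T (T x) = -x)
    (v : Fin 2 → ℂ) (i : Fin 2) (hvi : v i ≠ 0) (t : ℂ) (htv : T v = t • v) : False := by
  have hT0 : T 0 = (0 : Fin 2 → ℂ) := by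
    have h := hT 0 0 0 0
    simpa using h
  have hsmul : ∀ (c : ℂ) (x : Fin 2 → ℂ), T (c • x) = (starRingEnd ℂ c) • T x := by
    intro c x
    have h := hT c 0 x 0
    simpa [hT0] using h
  have h := hT2 v
  rw [htv, hsmul, htv, smul_smul] at h
  have h2 := congrFun h i
  simp only [Pi.smul_apply, Pi.neg_apply, smul_eq_mul] at h2
  have h3 : starRingEnd ℂ t * t = -1 :=
    mul_right_cancel₀ hvi (by linear_combination h2)
  have h4 : (Complex.normSq t : ℂ) = -1 := by
    rw [← Complex.normSq_eq_conj_mul_self] at h3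
    exact h3
  have h5 := congrArg Complex.re h4
  simp at h5
  linarith [Complex.normSq_nonneg t, h5]

theorem stmt7 (T : (Fin 2 → ℂ) → (Fin 2 → ℂ))
    (hT : ∀ (s t : ℂ) (x y : Fin 2 → ℂ),
      T (s • x + t • y) = (starRingEnd ℂ s) • T x + (starRingEnd ℂ t) • T y)
    (hT2 : ∀ x, T (T x) = -x)
    (P : Matrix (Fin 2) (Fin 2) ℂ) (hP : P * P = 1)
    (hcomm : ∀ x, P.mulVec (T x) = T (P.mulVec x)) :
    P = 1 ∨ P = -1 := by
  by_contra hcon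
  push_neg at hcon
  obtain ⟨h1, h2⟩ := hcon
  set a := P 0 0 with ha
  set b := P 0 1 with hb
  set c := P 1 0 with hc
  set d := P 1 1 with hd
  have e00 : a * a + b * c = 1 := by
    have h := congrFun (congrFun hP 0) 0
    simpa [Matrix.mul_apply, Fin.sum_univ_two, Matrix.one_apply] using h
  have e01 : a * b + b * d = 0 := by
    have h := congrFun (congrFun hP 0) 1
    simpa [Matrix.mul_apply, Fin.sum_univ_two, Matrix.one_apply] using h
  have e10 : c * a + d * c = 0 := by
    have h := congrFun (congrFun hP 1) 0
    simpa [Matrix.mul_apply, Fin.sum_univ_two, Matrix.one_apply] using h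
  have e11 : c * b + d * d = 1 := by
    have h := congrFun (congrFun hP 1) 1
    simpa [Matrix.mul_apply, Fin.sum_univ_two, Matrix.one_apply] using h
  by_cases had : a + d = 0
  · -- trace zero case
    have hd' : d = -a := by linear_combination had
    have main : ∀ v : Fin 2 → ℂ, P.mulVec v = v →
        (a * T v 0 + b * T v 1 = T v 0 ∧ c * T v 0 + d * T v 1 = T v 1) := by
      intro v hv
      have h := hcomm v
      rw [hv] at h
      constructor
      · have := congrFun h 0
        simpa [Matrix.mulVec, dotProduct, Fin.sum_univ_two, ← ha, ← hb] using this
      · have := congrFun h 1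
        simpa [Matrix.mulVec, dotProduct, Fin.sum_univ_two, ← hc, ← hd] using this
    by_cases hbz : b = 0
    · have ha2 : a * a = 1 := by linear_combination e00 - c * hbz
      rcases mul_self_eq_one_iff.mp ha2 with ha1 | ham1
      · -- a = 1, b = 0, d = -1 : v = ![2, c]
        set v : Fin 2 → ℂ := ![2, c] with hvdef
        have hv : P.mulVec v = v := by
          funext i
          fin_cases i
          · simp [Matrix.mulVec, dotProduct, Fin.sum_univ_two, hvdef, ← ha, ← hb]
            linear_combination 2 * ha1 + c * hbz
          · simp [Matrix.mulVec, dotProduct, Fin.sum_univ_two, hvdef, ← hc, ← hd]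
            linear_combination c * hd' - c * ha1
        obtain ⟨m0, m1⟩ := main v hv
        refine aux_no_fix T hT hT2 v 0 (by norm_num [hvdef]) (T v 0 / 2) ?_
        funext i
        fin_cases i
        · show T v 0 = T v 0 / 2 * v 0
          have : v 0 = 2 := rfl
          rw [this]; ring
        · show T v 1 = T v 0 / 2 * v 1
          simp only [hvdef]
          show T v 1 = T v 0 / 2 * c
          have : c * T v 0 - T v 1 = T v 1 := by
            linear_combination m1 - T v 1 * hd' + T v 1 * ha1
          field_simp
          linear_combination -this
      · -- a = -1, b = 0, d = 1 : v = ![0, 1]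
        set v : Fin 2 → ℂ := ![0, 1] with hvdef
        have hv : P.mulVec v = v := by
          funext i
          fin_cases i
          · simp [Matrix.mulVec, dotProduct, Fin.sum_univ_two, hvdef, ← ha, ← hb]
            exact hbz
          · simp [Matrix.mulVec, dotProduct, Fin.sum_univ_two, hvdef, ← hc, ← hd]
            linear_combination hd' - ham1
        obtain ⟨m0, m1⟩ := main v hv
        refine aux_no_fix T hT hT2 v 1 (by norm_num [hvdef]) (T v 1) ?_
        have hw0 : T v 0 = 0 := by
          have : a * T v 0 + b * T v 1 = T v 0 := m0
          have h' : (a - 1) * T v 0 = -(b * T v 1) := by linear_combination this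
          rw [ham1] at h'
          have : (-2 : ℂ) * T v 0 = -(b * T v 1) := by linear_combination h'
          rw [hbz] at this
          simp at this
          exact this
        funext i
        fin_cases i
        · show T v 0 = T v 1 * v 0
          rw [hw0]; simp [hvdef]
        · show T v 1 = T v 1 * v 1
          simp [hvdef]
    · -- b ≠ 0 : v = ![b, 1 - a]
      set v : Fin 2 → ℂ := ![b, 1 - a] with hvdef
      have hv : P.mulVec v = v := by
        funext i
        fin_cases i
        · simp [Matrix.mulVec, dotProduct, Fin.sum_univ_two, hvdef, ← ha, ← hb]
          ring
        · simp [Matrix.mulVec, dotProduct, Fin.sum_univ_two, hvdef, ← hc, ← hd]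
          linear_combination e00 + (1 - a) * hd'
      obtain ⟨m0, m1⟩ := main v hv
      refine aux_no_fix T hT hT2 v 0 (by simpa [hvdef] using hbz) (T v 0 / b) ?_
      funext i
      fin_cases i
      · show T v 0 = T v 0 / b * v 0
        simp only [hvdef]
        show T v 0 = T v 0 / b * b
        field_simp
      · show T v 1 = T v 0 / b * v 1
        simp only [hvdef]
        show T v 1 = T v 0 / b * (1 - a)
        have hb1 : b * T v 1 = (1 - a) * T v 0 := by linear_combination m0
        field_simp
        linear_combination hb1
  · -- trace nonzero: P is ±1
    have hbz : b = 0 := by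
      have h' : b * (a + d) = 0 := by linear_combination e01
      exact (mul_eq_zero.mp h').resolve_right had
    have hcz : c = 0 := by
      have h' : c * (a + d) = 0 := by linear_combination e10
      exact (mul_eq_zero.mp h').resolve_right had
    have ha2 : a * a = 1 := by linear_combination e00 - c * hbz
    have hd2 : d * d = 1 := by linear_combination e11 - b * hcz
    have hada : a = d := by
      have h' : (a - d) * (a + d) = 0 := by linear_combination ha2 - hd2
      have := (mul_eq_zero.mp h').resolve_right had
      linear_combination this
    rcases mul_self_eq_one_iff.mp ha2 with ha1 | ham1
    · apply h1
      funext i j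
      fin_cases i <;> fin_cases j <;>
        simp [Matrix.one_apply, ← ha, ← hb, ← hc, ← hd] <;>
        first
          | exact ha1
          | exact hbz
          | exact hcz
          | linear_combination ha1 - hada
    · apply h2
      funext i j
      fin_cases i <;> fin_cases j <;>
        simp [Matrix.one_apply, ← ha, ← hb, ← hc, ← hd] <;>
        first
          | exact ham1
          | exact hbz
          | exact hcz
          | linear_combination ham1 - hada
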